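/- arXiv:2511.03323 — 2 statements merged into one kernel-verified Lean document; each statement's English description precedes it below -/
import Mathlib

section
/- Let p be a prime with p ∣ q−1 and p ∤ (q−1)/r, let b ≥ 2 be an integer, and set n = (q^{p^b}−1)/(q^{p^{b−1}}−1) (note n is coprime to q). Then {l_i : i ∈ Z_{n,r}} = {p, p^b}, N_1 = 0, N_p = 1, and N_{p^b} = (n−p)/p^b. In particular, n ≡ p (mod p²). -/
open scoped Classical

/-- The `q`-cyclotomic coset of `i` modulo `N`, with representatives taken in `{1, …, N}`. -/
noncomputable def cosetOf (q N i : ℕ) : Finset ℕ :=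
  (Finset.Icc 1 N).filter (fun x => ∃ j : ℕ, x ≡ i * q ^ j [MOD N])

/-- `Z_{n,r} = {1 + i r : 0 ≤ i ≤ n-1}`. -/
def Zset (n r : ℕ) : Finset ℕ := (Finset.range n).image (fun i => 1 + i * r)

/-- The collection of `q`-cyclotomic cosets contained in `Z_{n,r}`. -/
noncomputable def cosetsIn (q n r : ℕ) : Finset (Finset ℕ) :=
  (Zset n r).image (fun i => cosetOf q (n * r) i)

/-- `N_l`: the number of `q`-cyclotomic cosets of size `l` contained in `Z_{n,r}`. -/
noncomputable def Ncount (q n r l : ℕ) : ℕ :=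
  ((cosetsIn q n r).filter (fun C => C.card = l)).card

/-- Coset leader: the smallest element of a coset. -/
noncomputable def leader (C : Finset ℕ) : ℕ := sInf (C : Set ℕ)

/-- The sorted (increasing) list of coset leaders of the cosets of size `l` in `Z_{n,r}`. -/
noncomputable def leaderList (q n r l : ℕ) : List ℕ :=
  Finset.sort (((cosetsIn q n r).filter (fun C => C.card = l)).image leader) (· ≤ ·)

/-- `δ_i^{(l)}`: the `i`-th smallest coset leader (1-indexed). -/
noncomputable def delta (q n r l i : ℕ) : ℕ := (leaderList q n r l).getD (i - 1) 0

lemma cast_pow_eq_one_iff (q M k : ℕ) : (q : ZMod M) ^ k = 1 ↔ q ^ k ≡ 1 [MOD M] := by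
  rw [← Nat.cast_pow, ← Nat.cast_one, ZMod.natCast_eq_natCast_iff]
lemma orderOf_cast_pos (q M : ℕ) (hM : 0 < M) (h : Nat.Coprime q M) :
    0 < orderOf (q : ZMod M) := by
  haveI : NeZero M := ⟨hM.ne'⟩
  have h1 : ((ZMod.unitOfCoprime q h : (ZMod M)ˣ) : ZMod M) = q := ZMod.coe_unitOfCoprime q h
  rw [← h1, orderOf_units]
  exact orderOf_pos _
lemma key_dvd_iff {q N i : ℕ} (hq : Nat.Coprime q N) (hi : 0 < i) (hiN : ¬ N ∣ i) :
    ∀ k, (N ∣ i * (q ^ k - 1) ↔ q ^ k ≡ 1 [MOD N / Nat.gcd i N]) := by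
  intro k
  set d := Nat.gcd i N with hd
  have hdpos : 0 < d := Nat.gcd_pos_of_pos_left _ hi
  have hdN : d ∣ N := Nat.gcd_dvd_right i N
  have hdi : d ∣ i := Nat.gcd_dvd_left i N
  have hNd : N = d * (N / d) := (Nat.mul_div_cancel' hdN).symm
  have hid : i = d * (i / d) := (Nat.mul_div_cancel' hdi).symm
  have hq1 : 1 ≤ q := by
    rcases Nat.eq_zero_or_pos q with h0 | h
    · exfalso; apply hiN; subst h0
      have hN1 : N = 1 := by simpa [Nat.Coprime] using hq
      simp [hN1]
    · exact h
  have hco : Nat.Coprime (i / d) (N / d) := Nat.coprime_div_gcd_div_gcd hdpos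
  constructor
  · intro h
    have h2 : d * (N / d) ∣ d * ((i / d) * (q ^ k - 1)) := by
      rw [← hNd, ← mul_assoc, ← hid]; exact h
    have h3 : N / d ∣ (i / d) * (q ^ k - 1) := (mul_dvd_mul_iff_left hdpos.ne').mp h2
    have h4 : N / d ∣ q ^ k - 1 := hco.symm.dvd_of_dvd_mul_left h3
    exact (Nat.modEq_iff_dvd' (Nat.one_le_pow _ _ hq1)).mpr h4 |>.symm
  · intro h
    have h4 : N / d ∣ q ^ k - 1 := (Nat.modEq_iff_dvd' (Nat.one_le_pow _ _ hq1)).mp h.symm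
    calc N = d * (N / d) := hNd
    _ ∣ i * (q ^ k - 1) := mul_dvd_mul hdi h4
lemma card_cosetOf {q N i : ℕ} (hN : 0 < N) (hq0 : 0 < q) (hq : Nat.Coprime q N)
    (hi : 0 < i) (hiN : ¬ N ∣ i) :
    (cosetOf q N i).card = orderOf ((q : ZMod (N / Nat.gcd i N))) := by
  set d := Nat.gcd i N with hd
  set M := N / d with hM
  have hdN : d ∣ N := Nat.gcd_dvd_right i N
  have hMpos : 0 < M := Nat.div_pos (Nat.le_of_dvd hN hdN) (Nat.gcd_pos_of_pos_left _ hi)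
  have hqM : Nat.Coprime q M := hq.coprime_dvd_right (Nat.div_dvd_of_dvd hdN)
  set l := orderOf ((q : ZMod M)) with hl
  have hlpos : 0 < l := orderOf_cast_pos q M hMpos hqM
  -- key: N ∣ i * (q^k - 1) ↔ l ∣ k
  have key : ∀ k, N ∣ i * (q ^ k - 1) ↔ l ∣ k := by
    intro k
    rw [key_dvd_iff hq hi hiN k, ← cast_pow_eq_one_iff, ← hM, hl, orderOf_dvd_iff_pow_eq_one]
  -- modeq form
  have keym : ∀ k, (i * q ^ k ≡ i [MOD N]) ↔ l ∣ k := by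
    intro k
    rw [← key k]
    have h1 : i ≤ i * q ^ k := Nat.le_mul_of_pos_right i (pow_pos hq0 k)
    constructor
    · intro h
      have := (Nat.modEq_iff_dvd' h1).mp h.symm
      have he : i * q ^ k - i = i * (q ^ k - 1) := by
        rw [Nat.mul_sub, mul_one]
      rwa [he] at this
    · intro h
      have he : i * q ^ k - i = i * (q ^ k - 1) := by
        rw [Nat.mul_sub, mul_one]
      exact ((Nat.modEq_iff_dvd' h1).mpr (he ▸ h)).symm
  have hndvd : ∀ j : ℕ, ¬ N ∣ i * q ^ j := by
    intro j hdvd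
    exact hiN ((Nat.Coprime.pow_left j hq).symm.dvd_of_dvd_mul_right hdvd)
  set f : ℕ → ℕ := fun j => i * q ^ j % N with hf
  have hfpos : ∀ j, 0 < f j := by
    intro j
    rcases Nat.eq_zero_or_pos (f j) with h0 | h
    · exact absurd (Nat.dvd_of_mod_eq_zero h0) (hndvd j)
    · exact h
  have hflt : ∀ j, f j < N := fun j => Nat.mod_lt _ hN
  have hfmod : ∀ j, f j ≡ i * q ^ j [MOD N] := fun j => Nat.mod_modEq _ _
  have hper : ∀ s t : ℕ, i * q ^ (l * s + t) ≡ i * q ^ t [MOD N] := by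
    intro s t
    induction s with
    | zero => simpa using Nat.ModEq.refl (i * q ^ t)
    | succ s ih =>
      have he : l * (s + 1) + t = (l * s + t) + l := by ring
      rw [he, pow_add, ← mul_assoc]
      calc i * q ^ (l * s + t) * q ^ l ≡ i * q ^ t * q ^ l [MOD N] := ih.mul_right _
        _ = i * q ^ l * q ^ t := by ring
        _ ≡ i * q ^ t [MOD N] := ((keym l).mpr dvd_rfl).mul_right _
  have himg : cosetOf q N i = (Finset.range l).image f := by
    ext x
    simp only [cosetOf, Finset.mem_filter, Finset.mem_Icc, Finset.mem_image, Finset.mem_range]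
    constructor
    · rintro ⟨⟨hx1, hxN⟩, j, hj⟩
      refine ⟨j % l, Nat.mod_lt _ hlpos, ?_⟩
      have hjj : i * q ^ j ≡ i * q ^ (j % l) [MOD N] := by
        conv_lhs => rw [← Nat.div_add_mod j l]
        exact hper (j / l) (j % l)
      have hx : x ≡ f (j % l) [MOD N] := (hj.trans hjj).trans (hfmod (j % l)).symm
      have hxlt : x < N := by
        rcases lt_or_eq_of_le hxN with h | h
        · exact h
        · exfalso
          have h0 : 0 % N = f (j % l) % N := by
            have := hx
            rwa [h, Nat.ModEq, Nat.mod_self] at this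
          rw [Nat.zero_mod, Nat.mod_eq_of_lt (hflt _)] at h0
          exact (hfpos (j % l)).ne h0
      have := hx
      rw [Nat.ModEq, Nat.mod_eq_of_lt hxlt, Nat.mod_eq_of_lt (hflt _)] at this
      exact this.symm
    · rintro ⟨j, hj, rfl⟩
      exact ⟨⟨hfpos j, le_of_lt (hflt j)⟩, j, hfmod j⟩
  have hinj : ∀ a b : ℕ, a ≤ b → b < l → f a = f b → a = b := by
    intro a b hab hbl hfab
    have hme : i * q ^ a ≡ i * q ^ b [MOD N] :=
      ((hfmod a).symm.trans (hfab ▸ (hfmod b) : f a ≡ i * q ^ b [MOD N]))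
    have hle : i * q ^ a ≤ i * q ^ b :=
      Nat.mul_le_mul_left i (Nat.pow_le_pow_right hq0 hab)
    have hdvd : N ∣ i * q ^ b - i * q ^ a := (Nat.modEq_iff_dvd' hle).mp hme
    have he : i * q ^ b - i * q ^ a = (i * (q ^ (b - a) - 1)) * q ^ a := by
      have h2 : i * q ^ b = i * q ^ (b - a) * q ^ a := by
        rw [mul_assoc, ← pow_add, Nat.sub_add_cancel hab]
      rw [h2, Nat.mul_sub, Nat.sub_mul, mul_one]
    rw [he] at hdvd
    have hdvd2 : N ∣ i * (q ^ (b - a) - 1) :=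
      ((Nat.Coprime.pow_left a hq).symm).dvd_of_dvd_mul_right hdvd
    have hlba : l ∣ b - a := (key _).mp hdvd2
    have hba : b - a < l := lt_of_le_of_lt (Nat.sub_le b a) hbl
    have h0 : b - a = 0 := Nat.eq_zero_of_dvd_of_lt hlba hba
    omega
  rw [himg, Finset.card_image_of_injOn, Finset.card_range]
  intro a ha b hb hfab
  simp only [Finset.coe_range, Set.mem_Iio] at ha hb
  rcases le_total a b with h | h
  · exact hinj a b h hb hfab
  · exact (hinj b a h ha hfab.symm).symm
lemma mem_cosetOf {q N i x : ℕ} :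
    x ∈ cosetOf q N i ↔ (1 ≤ x ∧ x ≤ N) ∧ ∃ j, x ≡ i * q ^ j [MOD N] := by
  simp [cosetOf, Finset.mem_filter, Finset.mem_Icc]
lemma mem_cosetOf_self {q N i : ℕ} (h1 : 1 ≤ i) (h2 : i ≤ N) : i ∈ cosetOf q N i :=
  mem_cosetOf.mpr ⟨⟨h1, h2⟩, 0, by simpa using Nat.ModEq.refl i⟩
lemma cosetOf_eq_of_mem {q N i x : ℕ} (hN : 0 < N) (hq : Nat.Coprime q N)
    (hx : x ∈ cosetOf q N i) : cosetOf q N x = cosetOf q N i := by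
  set T := orderOf ((q : ZMod N)) with hT
  have hTpos : 0 < T := orderOf_cast_pos q N hN hq
  have hqT : q ^ T ≡ 1 [MOD N] := (cast_pow_eq_one_iff q N T).mp (pow_orderOf_eq_one _)
  obtain ⟨⟨hx1, hxN⟩, j, hj⟩ := mem_cosetOf.mp hx
  ext z
  rw [mem_cosetOf, mem_cosetOf]
  constructor
  · rintro ⟨hz, k, hk⟩
    refine ⟨hz, j + k, ?_⟩
    calc z ≡ x * q ^ k [MOD N] := hk
      _ ≡ i * q ^ j * q ^ k [MOD N] := hj.mul_right _
      _ = i * q ^ (j + k) := by rw [mul_assoc, ← pow_add]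
  · rintro ⟨hz, k, hk⟩
    refine ⟨hz, k + j * T - j, ?_⟩
    have h1 : i * q ^ (k + j * T) ≡ i * q ^ k [MOD N] := by
      have he : i * q ^ (k + j * T) = i * q ^ k * (q ^ T) ^ j := by
        rw [mul_assoc, ← pow_mul, ← pow_add, mul_comm T j]
      rw [he]
      calc i * q ^ k * (q ^ T) ^ j ≡ i * q ^ k * 1 ^ j [MOD N] :=
            Nat.ModEq.mul_left _ (hqT.pow j)
        _ = i * q ^ k := by rw [one_pow, mul_one]
    have h2 : x * q ^ (k + j * T - j) ≡ i * q ^ (k + j * T) [MOD N] := by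
      have hje : j + (k + j * T - j) = k + j * T := by
        have : j ≤ j * T := Nat.le_mul_of_pos_right j hTpos
        omega
      calc x * q ^ (k + j * T - j) ≡ i * q ^ j * q ^ (k + j * T - j) [MOD N] := hj.mul_right _
        _ = i * q ^ (j + (k + j * T - j)) := by rw [mul_assoc, ← pow_add]
        _ = i * q ^ (k + j * T) := by rw [hje]
    exact (hk.trans h1.symm).trans h2.symm
lemma mem_Zset_iff {n r x : ℕ} (hr : 0 < r) :
    x ∈ Zset n r ↔ x ≡ 1 [MOD r] ∧ 1 ≤ x ∧ x ≤ n * r := by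
  simp only [Zset, Finset.mem_image, Finset.mem_range]
  constructor
  · rintro ⟨k, hk, rfl⟩
    refine ⟨?_, by omega, ?_⟩
    · show (1 + k * r) % r = 1 % r
      exact Nat.add_mul_mod_self_right 1 k r
    · have h1 : (k + 1) * r ≤ n * r := Nat.mul_le_mul_right r (by omega)
      have h2 : (k + 1) * r = k * r + r := by ring
      omega
  · rintro ⟨h1, hx1, hxn⟩
    have hdvd : r ∣ x - 1 := (Nat.modEq_iff_dvd' hx1).mp h1.symm
    obtain ⟨k, hk⟩ := hdvd
    have hcm : r * k = k * r := mul_comm r k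
    refine ⟨k, ?_, by omega⟩
    by_contra h
    push_neg at h
    have h2 : n * r ≤ k * r := Nat.mul_le_mul_right r h
    omega
lemma Zset_card {n r : ℕ} (hr : 0 < r) : (Zset n r).card = n := by
  rw [Zset, Finset.card_image_of_injective _ ?_, Finset.card_range]
  intro a b h
  have h' : 1 + a * r = 1 + b * r := h
  exact Nat.eq_of_mul_eq_mul_right hr (by omega)
lemma geom_mul (Q : ℕ) (hQ : 1 ≤ Q) :
    ∀ m : ℕ, (∑ j ∈ Finset.range m, Q ^ j) * (Q - 1) = Q ^ m - 1 := by
  intro m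
  induction m with
  | zero => simp
  | succ m ih =>
    rw [Finset.sum_range_succ, add_mul, ih]
    have h1 : Q ^ m * (Q - 1) = Q ^ (m + 1) - Q ^ m := by
      rw [Nat.mul_sub, mul_one, ← pow_succ]
    rw [h1]
    have h2 : 1 ≤ Q ^ m := Nat.one_le_pow _ _ hQ
    have h3 : Q ^ m ≤ Q ^ (m + 1) := Nat.pow_le_pow_right hQ (by omega)
    omega
lemma count_congr_window (r m c : ℕ) (hr : 0 < r) :
    ((Finset.Icc 1 (m * r)).filter (fun s => s ≡ c [MOD r])).card = m := by
  set c' : ℕ := if c % r = 0 then r else c % r with hc'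
  have hc'1 : 1 ≤ c' := by
    rw [hc']; split <;> omega
  have hc'r : c' ≤ r := by
    have := Nat.mod_lt c hr
    rw [hc']; split <;> omega
  have hc'mod : c' % r = c % r := by
    rw [hc']; split
    · rename_i h; rw [Nat.mod_self, h]
    · exact Nat.mod_mod_of_dvd c dvd_rfl
  have himg : (Finset.Icc 1 (m * r)).filter (fun s => s ≡ c [MOD r])
      = (Finset.range m).image (fun t => t * r + c') := by
    ext s
    simp only [Finset.mem_filter, Finset.mem_Icc, Finset.mem_image, Finset.mem_range]
    constructor
    · rintro ⟨⟨hs1, hsm⟩, hsc⟩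
      have hs : s % r = c % r := hsc
      have hdm : r * (s / r) + s % r = s := Nat.div_add_mod s r
      have hcm : r * (s / r) = (s / r) * r := mul_comm _ _
      by_cases h0 : c % r = 0
      · have hc'' : c' = r := by rw [hc', if_pos h0]
        have hu1 : 1 ≤ s / r := by
          rcases Nat.eq_zero_or_pos (s / r) with h | h
          · rw [h, mul_zero] at hdm
            omega
          · exact h
        have hum : s / r ≤ m := by
          by_contra hum
          push_neg at hum
          have : (m + 1) * r ≤ (s / r) * r := Nat.mul_le_mul_right r hum
          have h2 : (m + 1) * r = m * r + r := by ring
          omega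
        refine ⟨s / r - 1, by omega, ?_⟩
        have h3 : (s / r - 1) * r = (s / r) * r - r := by
          rw [Nat.sub_mul, one_mul]
        have h4 : r ≤ (s / r) * r := Nat.le_mul_of_pos_left r hu1
        omega
      · have hc'' : c' = c % r := by rw [hc', if_neg h0]
        refine ⟨s / r, ?_, by omega⟩
        by_contra hum
        push_neg at hum
        have : m * r ≤ (s / r) * r := Nat.mul_le_mul_right r hum
        omega
    · rintro ⟨t, ht, rfl⟩
      have h1 : (t + 1) * r ≤ m * r := Nat.mul_le_mul_right r (by omega)
      have h2 : (t + 1) * r = t * r + r := by ring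
      refine ⟨⟨by omega, by omega⟩, ?_⟩
      show (t * r + c') % r = c % r
      rw [mul_comm t r, Nat.mul_add_mod, hc'mod]
  rw [himg, Finset.card_image_of_injective _ ?_, Finset.card_range]
  intro a b h
  have h' : a * r + c' = b * r + c' := h
  exact Nat.eq_of_mul_eq_mul_right hr (by omega)
lemma dvd_geom_sum {p x : ℕ} (hp : 0 < p) (hx : p ∣ x - 1) (hx1 : 1 ≤ x) :
    p ∣ ∑ j ∈ Finset.range p, x ^ j := by
  haveI : NeZero p := ⟨hp.ne'⟩
  have hxm : (x : ZMod p) = 1 := by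
    rw [← Nat.cast_one, ZMod.natCast_eq_natCast_iff]
    exact ((Nat.modEq_iff_dvd' hx1).mpr hx).symm
  have h0 : ((∑ j ∈ Finset.range p, x ^ j : ℕ) : ZMod p) = 0 := by
    push_cast
    rw [hxm]
    simp [Finset.sum_const, ZMod.natCast_self]
  exact (ZMod.natCast_eq_zero_iff _ _).mp h0
lemma sq_dvd_pow_sub_one {p x : ℕ} (hp : 0 < p) (hx : p ∣ x - 1) (hx1 : 1 ≤ x) :
    p ^ 2 ∣ x ^ p - 1 := by
  rw [← geom_mul x hx1 p, pow_two]
  exact mul_dvd_mul (dvd_geom_sum hp hx hx1) hx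
theorem stmt18 (q r p b n : ℕ) (hq : IsPrimePow q) (hr : 0 < r) (hrdvd : r ∣ q - 1)
    (hp : p.Prime) (hp1 : p ∣ q - 1) (hp2 : ¬ p ∣ (q - 1) / r) (hb : 2 ≤ b)
    (hn : n = (q ^ p ^ b - 1) / (q ^ p ^ (b - 1) - 1)) :
    (Zset n r).image (fun i => (cosetOf q (n * r) i).card) = {p, p ^ b} ∧
    Ncount q n r 1 = 0 ∧
    Ncount q n r p = 1 ∧
    Ncount q n r (p ^ b) = (n - p) / p ^ b ∧
    n ≡ p [MOD p ^ 2] := by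
  have hq2 : 2 ≤ q := hq.two_le
  have hp2le : 2 ≤ p := hp.two_le
  have hple : p ≤ q - 1 := Nat.le_of_dvd (by omega) hp1
  set Q := q ^ p ^ (b - 1) with hQdef
  have hpb1pos : 0 < p ^ (b - 1) := pow_pos (by omega) _
  have hQq : q ≤ Q := Nat.le_self_pow hpb1pos.ne' q
  have hQ2 : 2 ≤ Q := le_trans hq2 hQq
  have hQp : Q ^ p = q ^ p ^ b := by
    rw [hQdef, ← pow_mul]
    congr 1
    rw [← pow_succ]
    congr 1
    omega
  have hgeom := geom_mul Q (by omega) p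
  set S := ∑ j ∈ Finset.range p, Q ^ j with hS
  have hnS : n = S := by
    rw [hn, ← hQp, ← hgeom, Nat.mul_div_cancel _ (by omega : 0 < Q - 1)]
  have hq1Q : q - 1 ∣ Q - 1 := by
    simpa using Nat.sub_dvd_pow_sub_pow q 1 (p ^ (b - 1))
  have hrQ : r ∣ Q - 1 := hrdvd.trans hq1Q
  have hpQ : p ∣ Q - 1 := hp1.trans hq1Q
  have hx1 : p ∣ q ^ p ^ (b - 2) - 1 :=
    hp1.trans (by simpa using Nat.sub_dvd_pow_sub_pow q 1 (p ^ (b - 2)))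
  have hQx : Q = (q ^ p ^ (b - 2)) ^ p := by
    rw [hQdef, ← pow_mul]
    congr 1
    rw [← pow_succ]
    congr 1
    omega
  have hp2Q : p ^ 2 ∣ Q - 1 := by
    rw [hQx]
    exact sq_dvd_pow_sub_one hp.pos hx1 (Nat.one_le_pow _ _ (by omega))
  have hQj1 : ∀ j : ℕ, Q - 1 ∣ Q ^ j - 1 := fun j => by
    simpa using Nat.sub_dvd_pow_sub_pow Q 1 j
  have hSp : S = (∑ j ∈ Finset.range p, (Q ^ j - 1)) + p := by
    rw [hS]
    have h1 : ∀ j ∈ Finset.range p, Q ^ j = (Q ^ j - 1) + 1 := fun j _ => by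
      have := Nat.one_le_pow j Q (by omega)
      omega
    rw [Finset.sum_congr rfl h1, Finset.sum_add_distrib, Finset.sum_const, Finset.card_range,
      smul_eq_mul, mul_one]
  have hQ1np : Q - 1 ∣ n - p := by
    rw [hnS, hSp, Nat.add_sub_cancel]
    exact Finset.dvd_sum (fun j _ => hQj1 j)
  have hpn_le : p ≤ n := by rw [hnS, hSp]; omega
  have hn_gt : p < n := by
    rw [hnS, hSp]
    have h1 : Q ^ 1 - 1 ≤ ∑ j ∈ Finset.range p, (Q ^ j - 1) :=
      Finset.single_le_sum (f := fun j => Q ^ j - 1) (fun j _ => Nat.zero_le _)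
        (Finset.mem_range.mpr (show 1 < p by omega))
    rw [pow_one] at h1
    omega
  have hmodp2 : n ≡ p [MOD p ^ 2] :=
    ((Nat.modEq_iff_dvd' hpn_le).mpr (dvd_trans hp2Q hQ1np)).symm
  have hpn : p ∣ n := by
    have h2 : n ≡ p [MOD p] := Nat.ModEq.of_dvd (dvd_pow_self p (by norm_num)) hmodp2
    have h3 : n % p = p % p := h2
    rw [Nat.mod_self] at h3
    exact Nat.dvd_of_mod_eq_zero h3
  have hp2n : ¬ p ^ 2 ∣ n := by
    intro h
    have h2 : p ^ 2 ∣ n - p := dvd_trans hp2Q hQ1np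
    have h3 : p ^ 2 ∣ p := by
      have h4 : n - (n - p) = p := by omega
      have h5 := Nat.dvd_sub h h2
      rwa [h4] at h5
    have h5 : p ^ 2 ≤ p := Nat.le_of_dvd hp.pos h3
    have h6 : p ^ 2 = p * p := pow_two p
    have h7 : 2 * p ≤ p * p := Nat.mul_le_mul_right p hp2le
    omega
  have hgcdnQ : Nat.gcd n (Q - 1) = p := by
    obtain ⟨t, ht⟩ := hQ1np
    have hcm : (Q - 1) * t = t * (Q - 1) := mul_comm _ _
    have hn' : n = p + t * (Q - 1) := by omega
    rw [hn', Nat.gcd_add_mul_right_left]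
    exact Nat.gcd_eq_left hpQ
  have hpr : p ∣ r := by
    by_contra hnpr
    obtain ⟨s, hs⟩ := hrdvd
    have h1 : p ∣ r * s := hs ▸ hp1
    have hps : p ∣ s := (hp.dvd_mul.mp h1).resolve_left hnpr
    apply hp2
    rw [hs, Nat.mul_div_cancel_left s hr]
    exact hps
  have hnp_pos : 0 < n := by omega
  have hMco : Nat.Coprime (n / p) r := by
    have hg1 : Nat.gcd (n / p) r ∣ n / p := Nat.gcd_dvd_left _ _
    have hg2 : Nat.gcd (n / p) r ∣ r := Nat.gcd_dvd_right _ _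
    have hgn : Nat.gcd (n / p) r ∣ n := hg1.trans (Nat.div_dvd_of_dvd hpn)
    have hgQ : Nat.gcd (n / p) r ∣ Q - 1 := hg2.trans hrQ
    have hgp : Nat.gcd (n / p) r ∣ p := by
      have h5 := Nat.dvd_gcd hgn hgQ
      rwa [hgcdnQ] at h5
    rcases hp.eq_one_or_self_of_dvd _ hgp with h | h
    · exact h
    · exfalso
      apply hp2n
      have hpnp : p ∣ n / p := by have h6 := hg1; rwa [h] at h6
      rw [pow_two]
      calc p * p ∣ p * (n / p) := mul_dvd_mul_left p hpnp
        _ = n := Nat.mul_div_cancel' hpn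
  have hq1r : q ≡ 1 [MOD r] := ((Nat.modEq_iff_dvd' (by omega)).mpr hrdvd).symm
  have hnQ : n * (Q - 1) = q ^ p ^ b - 1 := by rw [hnS, hgeom, hQp]
  have hNdvd : n * r ∣ q ^ p ^ b - 1 := by
    rw [← hnQ]
    exact mul_dvd_mul_left n hrQ
  have hqpow1 : 1 ≤ q ^ p ^ b := Nat.one_le_pow _ _ (by omega)
  have hqco : Nat.Coprime q (n * r) := by
    have hg1 : Nat.gcd q (n * r) ∣ q ^ p ^ b := (Nat.gcd_dvd_left _ _).trans (dvd_pow_self q (pow_pos hp.pos b).ne')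
    have hg2 : Nat.gcd q (n * r) ∣ q ^ p ^ b - 1 := (Nat.gcd_dvd_right _ _).trans hNdvd
    have hg3 : Nat.gcd q (n * r) ∣ 1 := by
      have h4 : q ^ p ^ b - (q ^ p ^ b - 1) = 1 := by omega
      exact h4 ▸ Nat.dvd_sub hg1 hg2
    exact Nat.eq_one_of_dvd_one hg3
  have hNpos : 0 < n * r := Nat.mul_pos hnp_pos hr
  -- order lemmas
  have hord_dvd : ∀ m : ℕ, m ∣ n * r → orderOf ((q : ZMod m)) ∣ p ^ b := by
    intro m hm
    have h1 : m ∣ q ^ p ^ b - 1 := hm.trans hNdvd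
    have h2 : q ^ p ^ b ≡ 1 [MOD m] := ((Nat.modEq_iff_dvd' hqpow1).mpr h1).symm
    exact orderOf_dvd_iff_pow_eq_one.mpr ((cast_pow_eq_one_iff q m (p ^ b)).mpr h2)
  have hprq : p * r ∣ q ^ p - 1 := by
    have hgq := geom_mul q (by omega) p
    have hpT : p ∣ ∑ j ∈ Finset.range p, q ^ j := dvd_geom_sum hp.pos hp1 (by omega)
    rw [← hgq]
    exact mul_dvd_mul hpT hrdvd
  have hprq1 : ¬ (p * r ∣ q - 1) := by
    intro h
    obtain ⟨w, hw⟩ := h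
    apply hp2
    have h1 : p * r * w = r * (p * w) := by ring
    rw [hw, h1, Nat.mul_div_cancel_left _ hr]
    exact Dvd.intro w rfl
  have hord_p : orderOf ((q : ZMod (p * r))) = p := by
    have h1 : (q : ZMod (p * r)) ^ p = 1 := by
      refine (cast_pow_eq_one_iff q (p * r) p).mpr ?_
      exact ((Nat.modEq_iff_dvd' (Nat.one_le_pow _ _ (by omega))).mpr hprq).symm
    have h2 : orderOf (q : ZMod (p * r)) ∣ p := orderOf_dvd_iff_pow_eq_one.mpr h1
    rcases hp.eq_one_or_self_of_dvd _ h2 with h | h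
    · exfalso
      have h3 : (q : ZMod (p * r)) = 1 := by
        have h4 := pow_orderOf_eq_one (q : ZMod (p * r))
        rwa [h, pow_one] at h4
      have h4 : q ≡ 1 [MOD p * r] := by
        rwa [← Nat.cast_one, ZMod.natCast_eq_natCast_iff] at h3
      exact hprq1 ((Nat.modEq_iff_dvd' (by omega)).mp h4.symm)
    · exact h
  have hord_big : ∀ e : ℕ, e ∣ n → e ≠ 1 → e ≠ p → orderOf ((q : ZMod (e * r))) = p ^ b := by
    intro e he he1 hep
    have h1 : orderOf ((q : ZMod (e * r))) ∣ p ^ b := hord_dvd _ (mul_dvd_mul_right he r)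
    obtain ⟨k, hk, hke⟩ := (Nat.dvd_prime_pow hp).mp h1
    by_cases hkb : k = b
    · rw [hke, hkb]
    · exfalso
      have h2 : orderOf ((q : ZMod (e * r))) ∣ p ^ (b - 1) := by
        rw [hke]
        exact pow_dvd_pow p (by omega)
      have h3 : (q : ZMod (e * r)) ^ p ^ (b - 1) = 1 := orderOf_dvd_iff_pow_eq_one.mp h2
      have h4 : Q ≡ 1 [MOD e * r] := (cast_pow_eq_one_iff q (e * r) (p ^ (b - 1))).mp h3
      have h5 : e * r ∣ Q - 1 := (Nat.modEq_iff_dvd' (by omega)).mp h4.symm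
      have h6 : e ∣ Q - 1 := (dvd_mul_right e r).trans h5
      have h7 : e ∣ p := by
        have h8 := Nat.dvd_gcd he h6
        rwa [hgcdnQ] at h8
      rcases hp.eq_one_or_self_of_dvd e h7 with h | h
      · exact he1 h
      · exact hep h
  -- dichotomy
  have hnnd : ∀ i : ℕ, i ≡ 1 [MOD r] → ¬ n ∣ i := by
    intro i hir hni
    have hpi : p ∣ i := dvd_trans hpn hni
    have h1 : i ≡ 1 [MOD p] := Nat.ModEq.of_dvd hpr hir
    have h2 : i % p = 1 % p := h1
    have h3 : i % p = 0 := Nat.mod_eq_zero_of_dvd hpi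
    have h4 : 1 % p = 1 := Nat.one_mod_eq_one.mpr (by omega)
    omega
  have hdichot : ∀ i ∈ Zset n r,
      (n / p ∣ i ∧ (cosetOf q (n * r) i).card = p) ∨
      (¬ n / p ∣ i ∧ (cosetOf q (n * r) i).card = p ^ b) := by
    intro i hi
    obtain ⟨hir, hi1, hiN⟩ := (mem_Zset_iff hr).mp hi
    have hir_co : Nat.Coprime i r := by
      obtain ⟨k, hk⟩ := (Nat.modEq_iff_dvd' hi1).mp hir.symm
      have hik : i = 1 + k * r := by
        have hcm : r * k = k * r := mul_comm _ _
        omega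
      rw [Nat.Coprime, hik, Nat.gcd_add_mul_right_left, Nat.gcd_one_left]
    have hgcd_i : Nat.gcd i (n * r) = Nat.gcd i n := by
      apply Nat.dvd_antisymm
      · apply Nat.dvd_gcd (Nat.gcd_dvd_left _ _)
        have h1 : Nat.gcd i (n * r) ∣ i := Nat.gcd_dvd_left _ _
        have h2 : Nat.gcd i (n * r) ∣ n * r := Nat.gcd_dvd_right _ _
        exact (Nat.Coprime.coprime_dvd_left h1 hir_co).dvd_of_dvd_mul_right h2
      · exact Nat.dvd_gcd (Nat.gcd_dvd_left _ _)
          ((Nat.gcd_dvd_right _ _).trans (dvd_mul_right n r))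
    have hnni : ¬ n ∣ i := hnnd i hir
    have hnri : ¬ n * r ∣ i := fun h => hnni ((dvd_mul_right n r).trans h)
    have hcard := card_cosetOf hNpos (by omega) hqco (by omega) hnri
    rw [hgcd_i] at hcard
    set d := Nat.gcd i n with hd
    have hdn : d ∣ n := Nat.gcd_dvd_right i n
    have hdpos : 0 < d := Nat.gcd_pos_of_pos_left _ (by omega)
    have hdiv : n * r / d = (n / d) * r := by
      obtain ⟨e, he⟩ := hdn
      rw [he, mul_assoc, Nat.mul_div_cancel_left _ hdpos, Nat.mul_div_cancel_left _ hdpos]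
    rw [hdiv] at hcard
    set e := n / d with he_def
    have hed : d * e = n := Nat.mul_div_cancel' hdn
    have he_ne1 : e ≠ 1 := by
      intro h
      apply hnni
      have h2 : d = n := by rw [← hed, h, mul_one]
      rw [← h2]
      exact Nat.gcd_dvd_left i n
    by_cases hep : e = p
    · left
      constructor
      · have h3 : d = n / p := by
          rw [← hed, hep]
          exact (Nat.mul_div_cancel d hp.pos).symm
        rw [← h3]
        exact Nat.gcd_dvd_left i n
      · rw [hcard, hep]
        exact hord_p
    · right
      constructor
      · intro hdvd
        have h1 : n / p ∣ d := Nat.dvd_gcd hdvd (Nat.div_dvd_of_dvd hpn)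
        obtain ⟨t, ht⟩ := h1
        have hnp' : n / p * p = n := Nat.div_mul_cancel hpn
        have hnppos : 0 < n / p := Nat.div_pos hpn_le hp.pos
        have hte : t * e = p := by
          have h2 : n / p * (t * e) = n / p * p := by
            rw [← mul_assoc, ← ht, hed, hnp']
          exact Nat.eq_of_mul_eq_mul_left hnppos h2
        have h3 : e ∣ p := ⟨t, by rw [← hte, mul_comm]⟩
        rcases hp.eq_one_or_self_of_dvd e h3 with h | h
        · exact he_ne1 h
        · exact hep h
      · rw [hcard]
        exact hord_big e (Nat.div_dvd_of_dvd hdn) he_ne1 hep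
  have hsubZ : ∀ i ∈ Zset n r, cosetOf q (n * r) i ⊆ Zset n r := by
    intro i hi x hx
    obtain ⟨hir, hi1, hiN⟩ := (mem_Zset_iff hr).mp hi
    obtain ⟨⟨hx1, hxN⟩, j, hj⟩ := mem_cosetOf.mp hx
    refine (mem_Zset_iff hr).mpr ⟨?_, hx1, hxN⟩
    have h1 : x ≡ i * q ^ j [MOD r] := Nat.ModEq.of_dvd (dvd_mul_left r n) hj
    exact h1.trans (by simpa using Nat.ModEq.mul hir (hq1r.pow j))
  have hcos_eq : ∀ i ∈ Zset n r, ∀ x ∈ cosetOf q (n * r) i,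
      cosetOf q (n * r) x = cosetOf q (n * r) i :=
    fun i _ x hx => cosetOf_eq_of_mem hNpos hqco hx
  have hself : ∀ i ∈ Zset n r, i ∈ cosetOf q (n * r) i := by
    intro i hi
    obtain ⟨_, hi1, hiN⟩ := (mem_Zset_iff hr).mp hi
    exact mem_cosetOf_self hi1 hiN
  have hEcard : ∀ l : ℕ,
      ((Zset n r).filter (fun i => (cosetOf q (n * r) i).card = l)).card = l * Ncount q n r l := by
    intro l
    have hbi : (Zset n r).filter (fun i => (cosetOf q (n * r) i).card = l)
        = ((cosetsIn q n r).filter (fun C => C.card = l)).biUnion id := by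
      ext x
      simp only [Finset.mem_biUnion, Finset.mem_filter, cosetsIn, Finset.mem_image, id]
      constructor
      · rintro ⟨hxZ, hxc⟩
        exact ⟨cosetOf q (n * r) x, ⟨⟨x, hxZ, rfl⟩, hxc⟩, hself x hxZ⟩
      · rintro ⟨C, ⟨⟨i, hiZ, rfl⟩, hC⟩, hxC⟩
        have hxZ : x ∈ Zset n r := hsubZ i hiZ hxC
        have h2 : cosetOf q (n * r) x = cosetOf q (n * r) i := hcos_eq i hiZ x hxC
        rw [← h2] at hC
        exact ⟨hxZ, hC⟩
    rw [hbi, Finset.card_biUnion]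
    · rw [Ncount]
      have hsum : ∑ C ∈ (cosetsIn q n r).filter (fun C => C.card = l), (id C).card
          = ∑ _C ∈ (cosetsIn q n r).filter (fun C => C.card = l), l :=
        Finset.sum_congr rfl (fun C hC => (Finset.mem_filter.mp hC).2)
      rw [hsum, Finset.sum_const, smul_eq_mul, mul_comm]
    · intro C1 hC1 C2 hC2 hne
      simp only [Finset.mem_coe, Finset.mem_filter, cosetsIn, Finset.mem_image] at hC1 hC2
      obtain ⟨⟨i1, hi1Z, rfl⟩, _⟩ := hC1
      obtain ⟨⟨i2, hi2Z, rfl⟩, _⟩ := hC2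
      simp only [Function.onFun, id]
      rw [Finset.disjoint_left]
      intro x hx1 hx2
      apply hne
      rw [← hcos_eq i1 hi1Z x hx1, ← hcos_eq i2 hi2Z x hx2]
  have hcases : ∀ i ∈ Zset n r,
      (cosetOf q (n * r) i).card = p ∨ (cosetOf q (n * r) i).card = p ^ b :=
    fun i hi => (hdichot i hi).elim (fun h => Or.inl h.2) (fun h => Or.inr h.2)
  have hppb : p ≠ p ^ b := by
    have h1 : p ^ 1 < p ^ b := Nat.pow_lt_pow_right hp.one_lt (by omega)
    rw [pow_one] at h1
    omega
  -- E_p as a divisibility filter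
  have hEp : (Zset n r).filter (fun i => (cosetOf q (n * r) i).card = p)
      = (Zset n r).filter (fun i => n / p ∣ i) := by
    ext i
    simp only [Finset.mem_filter]
    constructor
    · rintro ⟨hiZ, hic⟩
      refine ⟨hiZ, ?_⟩
      rcases hdichot i hiZ with h | h
      · exact h.1
      · exact absurd (hic.symm.trans h.2) hppb
    · rintro ⟨hiZ, hid⟩
      refine ⟨hiZ, ?_⟩
      rcases hdichot i hiZ with h | h
      · exact h.2
      · exact absurd hid h.1
  -- cardinality of the divisibility filter
  have hMpos : 0 < n / p := Nat.div_pos hpn_le hp.pos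
  have hMrn : n / p * (p * r) = n * r := by
    rw [← mul_assoc, Nat.div_mul_cancel hpn]
  have himgEp : (Zset n r).filter (fun i => n / p ∣ i)
      = ((Finset.Icc 1 (p * r)).filter (fun s => n / p * s ≡ 1 [MOD r])).image
          (fun s => n / p * s) := by
    ext x
    simp only [Finset.mem_filter, Finset.mem_image, Finset.mem_Icc]
    constructor
    · rintro ⟨hxZ, hMx⟩
      obtain ⟨hxr, hx1, hxN⟩ := (mem_Zset_iff hr).mp hxZ
      obtain ⟨s, hs⟩ := hMx
      refine ⟨s, ⟨⟨?_, ?_⟩, ?_⟩, hs.symm⟩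
      · rcases Nat.eq_zero_or_pos s with h | h
        · rw [h, mul_zero] at hs
          omega
        · exact h
      · rw [hs, ← hMrn] at hxN
        exact Nat.le_of_mul_le_mul_left hxN hMpos
      · rw [← hs]
        exact hxr
    · rintro ⟨s, ⟨⟨hs1, hspr⟩, hsmod⟩, rfl⟩
      refine ⟨(mem_Zset_iff hr).mpr ⟨hsmod, ?_, ?_⟩, dvd_mul_right _ _⟩
      · exact Nat.mul_pos hMpos hs1
      · rw [← hMrn]
        exact Nat.mul_le_mul_left _ hspr
  obtain ⟨c, hc⟩ : ∃ c, n / p * c ≡ 1 [MOD r] := by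
    rcases eq_or_lt_of_le (show 1 ≤ r from hr) with h1 | h1
    · exact ⟨1, by simp [Nat.ModEq, ← h1, Nat.mod_one]⟩
    · obtain ⟨c, -, hc⟩ := Nat.exists_mul_mod_eq_one_of_coprime hMco h1
      refine ⟨c, ?_⟩
      show n / p * c % r = 1 % r
      rw [hc, Nat.mod_eq_of_lt h1]
  have hfil : (Finset.Icc 1 (p * r)).filter (fun s => n / p * s ≡ 1 [MOD r])
      = (Finset.Icc 1 (p * r)).filter (fun s => s ≡ c [MOD r]) := by
    apply Finset.filter_congr
    intro s _
    constructor
    · intro h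
      exact Nat.ModEq.cancel_left_of_coprime (Nat.Coprime.gcd_eq_one hMco.symm) (h.trans hc.symm)
    · intro h
      exact (Nat.ModEq.mul_left (n / p) h).trans hc
  have hEpcard : ((Zset n r).filter (fun i => n / p ∣ i)).card = p := by
    rw [himgEp, Finset.card_image_of_injective _ (fun a b h => Nat.eq_of_mul_eq_mul_left hMpos h),
      hfil, count_congr_window r p c hr]
  -- split of Zset
  have hsplit : ((Zset n r).filter (fun i => (cosetOf q (n * r) i).card = p)).card
      + ((Zset n r).filter (fun i => ¬ (cosetOf q (n * r) i).card = p)).card = n := by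
    rw [Finset.card_filter_add_card_filter_not, Zset_card hr]
  have hEbig : (Zset n r).filter (fun i => (cosetOf q (n * r) i).card = p ^ b)
      = (Zset n r).filter (fun i => ¬ (cosetOf q (n * r) i).card = p) := by
    ext i
    simp only [Finset.mem_filter]
    constructor
    · rintro ⟨hiZ, hic⟩
      refine ⟨hiZ, ?_⟩
      rw [hic]
      exact fun h => hppb h.symm
    · rintro ⟨hiZ, hic⟩
      refine ⟨hiZ, ?_⟩
      rcases hcases i hiZ with h | h
      · exact absurd h hic
      · exact h
  have hcard_p : ((Zset n r).filter (fun i => (cosetOf q (n * r) i).card = p)).card = p := by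
    rw [hEp, hEpcard]
  have hcard_big : ((Zset n r).filter (fun i => (cosetOf q (n * r) i).card = p ^ b)).card
      = n - p := by
    rw [hEbig]
    omega
  refine ⟨?_, ?_, ?_, ?_, hmodp2⟩
  · ext l
    simp only [Finset.mem_image, Finset.mem_insert, Finset.mem_singleton]
    constructor
    · rintro ⟨i, hi, rfl⟩
      exact hcases i hi
    · rintro (h | h)
      · have h1 : 0 < ((Zset n r).filter (fun i => (cosetOf q (n * r) i).card = p)).card := by
          rw [hcard_p]
          omega
        obtain ⟨i, hi⟩ := Finset.card_pos.mp h1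
        obtain ⟨hiZ, hic⟩ := Finset.mem_filter.mp hi
        exact ⟨i, hiZ, by rw [h]; exact hic⟩
      · have h1 : 0 < ((Zset n r).filter
            (fun i => (cosetOf q (n * r) i).card = p ^ b)).card := by
          rw [hcard_big]
          omega
        obtain ⟨i, hi⟩ := Finset.card_pos.mp h1
        obtain ⟨hiZ, hic⟩ := Finset.mem_filter.mp hi
        exact ⟨i, hiZ, by rw [h]; exact hic⟩
  · have h1 := hEcard 1
    have h2 : (Zset n r).filter (fun i => (cosetOf q (n * r) i).card = 1) = ∅ := by
      rw [Finset.eq_empty_iff_forall_notMem]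
      intro i hi
      obtain ⟨hiZ, hic⟩ := Finset.mem_filter.mp hi
      have hpb : p ≤ p ^ b := Nat.le_self_pow (by omega) p
      rcases hcases i hiZ with h | h <;> omega
    rw [h2, Finset.card_empty] at h1
    omega
  · have h1 := hEcard p
    rw [hcard_p] at h1
    have h2 : p * 1 = p * Ncount q n r p := by rw [mul_one]; exact h1
    exact (Nat.eq_of_mul_eq_mul_left hp.pos h2).symm
  · have h1 := hEcard (p ^ b)
    rw [hcard_big] at h1
    rw [h1, Nat.mul_div_cancel_left _ (pow_pos hp.pos b)]
end

section
/- Let p₁ < p₂ be two distinct primes, set n = (q^{p₁p₂}−1)/lcm(q^{p₁}−1, q^{p₂}−1) (note n is coprime to q), and assume p₂ ∤ (q^{p₁}−1)/r. Then {l_i : i ∈ Z_{n,r}} = {1, p₁p₂}, N_1 = 1, N_{p₁} = N_{p₂} = 0, and N_{p₁p₂} = (n−1)/(p₁p₂). -/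
open scoped Classical

lemma geom_nat (x k : ℕ) (hx : 1 ≤ x) :
    (x - 1) * ∑ j ∈ Finset.range k, x ^ j = x ^ k - 1 := by
  have h := geom_sum_mul (x : ℤ) k
  have h1 : (1:ℕ) ≤ x ^ k := Nat.one_le_pow _ _ hx
  zify [hx, h1]
  push_cast
  linarith [h]

lemma pow_eq_one_iff_dvd (d q k : ℕ) (hq : 1 ≤ q) :
    ((q : ZMod d)) ^ k = 1 ↔ d ∣ q ^ k - 1 := by
  rw [← Nat.modEq_iff_dvd' (Nat.one_le_pow _ _ hq), ← ZMod.natCast_eq_natCast_iff]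
  push_cast
  exact eq_comm

lemma dvd_prime_mul_prime (p₁ p₂ e : ℕ) (hp1 : p₁.Prime) (hp2 : p₂.Prime) (hne : p₁ ≠ p₂)
    (h : e ∣ p₁ * p₂) : e ∣ p₁ ∨ e ∣ p₂ ∨ e = p₁ * p₂ := by
  by_cases h1 : p₁ ∣ e
  · by_cases h2 : p₂ ∣ e
    · right; right
      exact Nat.dvd_antisymm h
        (Nat.Coprime.mul_dvd_of_dvd_of_dvd ((Nat.coprime_primes hp1 hp2).2 hne) h1 h2)
    · left
      have hco : Nat.Coprime e p₂ := ((hp2.coprime_iff_not_dvd).2 h2).symm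
      exact hco.dvd_of_dvd_mul_right h
  · right; left
    have hco : Nat.Coprime e p₁ := ((hp1.coprime_iff_not_dvd).2 h1).symm
    exact hco.dvd_of_dvd_mul_left h

lemma exists_prime_dvd_of_not_coprime (a b : ℕ) (h : ¬ Nat.Coprime a b) :
    ∃ p, p.Prime ∧ p ∣ a ∧ p ∣ b := by
  have hg : Nat.gcd a b ≠ 1 := h
  exact ⟨(Nat.gcd a b).minFac, Nat.minFac_prime hg,
    dvd_trans (Nat.minFac_dvd _) (Nat.gcd_dvd_left _ _),
    dvd_trans (Nat.minFac_dvd _) (Nat.gcd_dvd_right _ _)⟩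

lemma coprime_of_dvd_pow_sub_one (m q e : ℕ) (hq : 1 ≤ q) (he : 0 < e)
    (h : m ∣ q ^ e - 1) : Nat.Coprime m q := by
  have h1 : Nat.gcd m q ∣ q ^ e := dvd_pow (Nat.gcd_dvd_right m q) he.ne'
  have h2 : Nat.gcd m q ∣ q ^ e - 1 := dvd_trans (Nat.gcd_dvd_left m q) h
  have h3 : Nat.gcd m q ∣ 1 := by
    have h4 : q ^ e - (q ^ e - 1) = 1 := by
      have := Nat.one_le_pow e q hq
      omega
    exact h4 ▸ Nat.dvd_sub h1 h2
  exact Nat.eq_one_of_dvd_one h3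

lemma gcd_pow_sub_one (q a b : ℕ) (hq : 2 ≤ q) (hab : Nat.Coprime a b) :
    Nat.gcd (q ^ a - 1) (q ^ b - 1) = q - 1 := by
  set G := Nat.gcd (q ^ a - 1) (q ^ b - 1) with hG
  have hq1 : 1 ≤ q := by omega
  have h1 : q - 1 ∣ G := by
    apply Nat.dvd_gcd
    · simpa using Nat.sub_dvd_pow_sub_pow q 1 a
    · simpa using Nat.sub_dvd_pow_sub_pow q 1 b
  have h2 : G ∣ q - 1 := by
    have ha' : (q : ZMod G) ^ a = 1 := (pow_eq_one_iff_dvd G q a hq1).2 (Nat.gcd_dvd_left _ _)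
    have hb' : (q : ZMod G) ^ b = 1 := (pow_eq_one_iff_dvd G q b hq1).2 (Nat.gcd_dvd_right _ _)
    have hone : (q : ZMod G) = 1 := by
      have hda : orderOf (q : ZMod G) ∣ a := orderOf_dvd_of_pow_eq_one ha'
      have hdb : orderOf (q : ZMod G) ∣ b := orderOf_dvd_of_pow_eq_one hb'
      have hd1 : orderOf (q : ZMod G) ∣ 1 := hab ▸ Nat.dvd_gcd hda hdb
      exact orderOf_eq_one_iff.1 (Nat.eq_one_of_dvd_one hd1)
    have : (q : ZMod G) ^ 1 = 1 := by rw [pow_one, hone]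
    simpa using (pow_eq_one_iff_dvd G q 1 hq1).1 this
  exact Nat.dvd_antisymm h2 h1

lemma period_mul (N i q E : ℕ) (hE : i * q ^ E ≡ i [MOD N]) :
    ∀ t, i * q ^ (E * t) ≡ i [MOD N] := by
  intro t
  induction t with
  | zero => simpa using Nat.ModEq.refl i
  | succ t ih =>
    have h : i * q ^ (E * (t + 1)) = (i * q ^ (E * t)) * q ^ E := by ring
    rw [h]
    calc (i * q ^ (E * t)) * q ^ E ≡ i * q ^ E [MOD N] := Nat.ModEq.mul_right _ ih
      _ ≡ i [MOD N] := hE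

lemma period_mod (N i q E : ℕ) (hE : i * q ^ E ≡ i [MOD N]) (j : ℕ) :
    i * q ^ j ≡ i * q ^ (j % E) [MOD N] := by
  by_cases hE0 : E = 0
  · subst hE0; rw [Nat.mod_zero]
  conv_lhs => rw [← Nat.div_add_mod j E]
  have h : i * q ^ (E * (j / E) + j % E) = (i * q ^ (E * (j / E))) * q ^ (j % E) := by ring
  rw [h]
  exact Nat.ModEq.mul_right _ (period_mul N i q E hE _)

lemma castIcc_inj (N : ℕ) {x y : ℕ} (hx : x ∈ Finset.Icc 1 N)
    (hy : y ∈ Finset.Icc 1 N) (h : (x : ZMod N) = (y : ZMod N)) : x = y := by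
  simp only [Finset.mem_Icc] at hx hy
  rw [ZMod.natCast_eq_natCast_iff'] at h
  rcases eq_or_lt_of_le hx.2 with h2 | h2 <;> rcases eq_or_lt_of_le hy.2 with h3 | h3
  · omega
  · rw [h2, Nat.mod_self, Nat.mod_eq_of_lt h3] at h; omega
  · rw [h3, Nat.mod_self, Nat.mod_eq_of_lt h2] at h; omega
  · rwa [Nat.mod_eq_of_lt h2, Nat.mod_eq_of_lt h3] at h

lemma castIcc_surj (N : ℕ) (hN : 0 < N) (z : ZMod N) :
    ∃ x ∈ Finset.Icc 1 N, (x : ZMod N) = z := by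
  haveI : NeZero N := ⟨hN.ne'⟩
  rcases Nat.eq_zero_or_pos z.val with h | h
  · refine ⟨N, Finset.mem_Icc.2 ⟨hN, le_refl N⟩, ?_⟩
    rw [ZMod.natCast_self]
    exact ((ZMod.val_eq_zero z).1 h).symm
  · refine ⟨z.val, Finset.mem_Icc.2 ⟨h, (ZMod.val_lt z).le⟩, ?_⟩
    rw [ZMod.natCast_val, ZMod.cast_id]

lemma coset_eq_of_mem (q N i x E : ℕ) (hE : i * q ^ E ≡ i [MOD N]) (hE1 : 0 < E)
    (hx : x ∈ cosetOf q N i) : cosetOf q N x = cosetOf q N i := by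
  simp only [cosetOf, Finset.mem_filter] at hx
  obtain ⟨hxI, j0, hj0⟩ := hx
  have hle : j0 ≤ E * j0 := Nat.le_mul_of_pos_left j0 hE1
  have hix : i ≡ x * q ^ (E * j0 - j0) [MOD N] := by
    have h1 : i * q ^ (E * j0) ≡ i [MOD N] := period_mul N i q E hE j0
    have h2 : i * q ^ (E * j0) = (i * q ^ j0) * q ^ (E * j0 - j0) := by
      rw [mul_assoc, ← pow_add]
      congr 2
      omega
    rw [h2] at h1
    exact h1.symm.trans (Nat.ModEq.mul_right _ hj0.symm)
  ext y
  simp only [cosetOf, Finset.mem_filter]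
  constructor
  · rintro ⟨hy, j, hj⟩
    refine ⟨hy, j0 + j, ?_⟩
    calc y ≡ x * q ^ j [MOD N] := hj
      _ ≡ (i * q ^ j0) * q ^ j [MOD N] := Nat.ModEq.mul_right _ hj0
      _ = i * q ^ (j0 + j) := by ring
  · rintro ⟨hy, j, hj⟩
    refine ⟨hy, (E * j0 - j0) + j, ?_⟩
    calc y ≡ i * q ^ j [MOD N] := hj
      _ ≡ (x * q ^ (E * j0 - j0)) * q ^ j [MOD N] := Nat.ModEq.mul_right _ hix
      _ = x * q ^ ((E * j0 - j0) + j) := by ring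

lemma card_cosetOf_s19 (q N i E : ℕ) (hN : 0 < N) (hE1 : 0 < E)
    (hE : i * q ^ E ≡ i [MOD N]) (hi : i ∈ Finset.Icc 1 N)
    (hmin : ∀ a b : ℕ, a ≤ b → b < E → i * q ^ a ≡ i * q ^ b [MOD N] → a = b) :
    (cosetOf q N i).card = E := by
  have hcard : (cosetOf q N i).card =
      ((Finset.range E).image (fun j => ((i * q ^ j : ℕ) : ZMod N))).card := by
    apply Finset.card_bij (fun x _ => ((x : ℕ) : ZMod N))
    · intro x hx
      simp only [cosetOf, Finset.mem_filter] at hx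
      obtain ⟨hxI, j, hj⟩ := hx
      refine Finset.mem_image.2 ⟨j % E, Finset.mem_range.2 (Nat.mod_lt _ hE1), ?_⟩
      exact ((ZMod.natCast_eq_natCast_iff _ _ _).2 (hj.trans (period_mod N i q E hE j))).symm
    · intro x hx y hy h
      simp only [cosetOf, Finset.mem_filter] at hx hy
      exact castIcc_inj N hx.1 hy.1 h
    · intro z hz
      obtain ⟨j, hjE, rfl⟩ := Finset.mem_image.1 hz
      obtain ⟨x, hxI, hxz⟩ := castIcc_surj N hN ((i * q ^ j : ℕ) : ZMod N)
      refine ⟨x, ?_, hxz⟩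
      simp only [cosetOf, Finset.mem_filter]
      exact ⟨hxI, j, (ZMod.natCast_eq_natCast_iff _ _ _).1 hxz⟩
  rw [hcard, Finset.card_image_of_injOn, Finset.card_range]
  intro a ha b hb hab
  simp only [Finset.coe_range, Set.mem_Iio] at ha hb
  rw [ZMod.natCast_eq_natCast_iff] at hab
  rcases le_total a b with h | h
  · exact hmin a b h hb hab
  · exact (hmin b a h ha hab.symm).symm
theorem stmt19 (q r p₁ p₂ n : ℕ) (hq : IsPrimePow q) (hr : 0 < r) (hrdvd : r ∣ q - 1)
    (hp1 : p₁.Prime) (hp2 : p₂.Prime) (hlt : p₁ < p₂)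
    (hn : n = (q ^ (p₁ * p₂) - 1) / Nat.lcm (q ^ p₁ - 1) (q ^ p₂ - 1))
    (hndvd : ¬ p₂ ∣ (q ^ p₁ - 1) / r) :
    (Zset n r).image (fun i => (cosetOf q (n * r) i).card) = {1, p₁ * p₂} ∧
    Ncount q n r 1 = 1 ∧
    Ncount q n r p₁ = 0 ∧
    Ncount q n r p₂ = 0 ∧
    Ncount q n r (p₁ * p₂) = (n - 1) / (p₁ * p₂) := by
  classical
  have hq2 : 2 ≤ q := hq.two_le
  have hq1 : 1 ≤ q := by omega
  have hp1two : 2 ≤ p₁ := hp1.two_le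
  have hp2two : 2 ≤ p₂ := hp2.two_le
  have hPpos : 0 < p₁ * p₂ := by positivity
  have hP4 : 4 ≤ p₁ * p₂ := by
    calc 4 = 2 * 2 := rfl
    _ ≤ p₁ * p₂ := Nat.mul_le_mul hp1two hp2two
  set N := n * r with hNdef
  set A := q ^ p₁ - 1 with hA
  set B := q ^ p₂ - 1 with hB
  set M := q ^ (p₁ * p₂) - 1 with hM
  set L := Nat.lcm A B with hL
  set S := ∑ k ∈ Finset.range p₂, (q ^ p₁) ^ k with hS
  set T := ∑ k ∈ Finset.range p₂, q ^ k with hT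
  set S' := ∑ k ∈ Finset.range p₁, (q ^ p₂) ^ k with hS'
  set U := ∑ k ∈ Finset.range p₁, q ^ k with hU
  have hApos : 0 < A := by
    have h1 : 2 ≤ q ^ p₁ := le_trans hq2 (Nat.le_self_pow (by omega) q)
    omega
  have hBpos : 0 < B := by
    have h1 : 2 ≤ q ^ p₂ := le_trans hq2 (Nat.le_self_pow (by omega) q)
    omega
  have hAS : A * S = M := by
    rw [hA, hS, hM, geom_nat (q ^ p₁) p₂ (Nat.one_le_pow _ _ hq1), ← pow_mul]
  have hBS' : B * S' = M := by
    rw [hB, hS', hM, geom_nat (q ^ p₂) p₁ (Nat.one_le_pow _ _ hq1), ← pow_mul,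
      Nat.mul_comm p₂ p₁]
  have hqT : (q - 1) * T = B := geom_nat q p₂ hq1
  have hqU : (q - 1) * U = A := geom_nat q p₁ hq1
  have hAM : A ∣ M := ⟨S, hAS.symm⟩
  have hBM : B ∣ M := ⟨S', hBS'.symm⟩
  have hLM : L ∣ M := Nat.lcm_dvd hAM hBM
  have hnL : n * L = M := by rw [hn]; exact Nat.div_mul_cancel hLM
  have hnM : n ∣ M := ⟨L, hnL.symm⟩
  have hgcdAB : Nat.gcd A B = q - 1 :=
    gcd_pow_sub_one q p₁ p₂ hq2 ((Nat.coprime_primes hp1 hp2).2 hlt.ne)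
  have hLA : L = A * T := by
    have h1 : (q - 1) * L = A * B := by rw [← hgcdAB]; exact Nat.gcd_mul_lcm A B
    have h2 : (q - 1) * L = (q - 1) * (A * T) := by rw [h1, ← hqT]; ring
    exact Nat.eq_of_mul_eq_mul_left (by omega) h2
  have hLB : L = B * U := by
    have h1 : (q - 1) * L = A * B := by rw [← hgcdAB]; exact Nat.gcd_mul_lcm A B
    have h2 : (q - 1) * L = (q - 1) * (B * U) := by rw [h1, ← hqU]; ring
    exact Nat.eq_of_mul_eq_mul_left (by omega) h2
  have hnT : n * T = S := by
    have h : A * (n * T) = A * S := by rw [hAS, ← hnL, hLA]; ring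
    exact Nat.eq_of_mul_eq_mul_left hApos h
  have hnU : n * U = S' := by
    have h : B * (n * U) = B * S' := by rw [hBS', ← hnL, hLB]; ring
    exact Nat.eq_of_mul_eq_mul_left hBpos h
  have hTS : T < S := by
    rw [hT, hS]
    apply Finset.sum_lt_sum
    · intro k hk
      rw [← pow_mul]
      exact Nat.pow_le_pow_right hq1 (Nat.le_mul_of_pos_left k (by omega))
    · refine ⟨1, Finset.mem_range.2 (by omega), ?_⟩
      have h1 : q ^ 1 < q ^ p₁ := Nat.pow_lt_pow_right (by omega) (by omega)
      simpa using h1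
  have hn2 : 2 ≤ n := by
    have h1 : T < n * T := by rw [hnT]; exact hTS
    rcases n with _ | _ | m
    · simp at h1
    · simp at h1
    · omega
  have hnq : Nat.Coprime n q :=
    coprime_of_dvd_pow_sub_one n q (p₁ * p₂) hq1 hPpos (hM ▸ hnM)
  -- sub-lemmas : a prime dividing n with q^{p₁}=1 (resp q^{p₂}=1) mod it must be p₂ (resp p₁)
  have subA : ∀ ℓ : ℕ, ℓ.Prime → ℓ ∣ n → (q : ZMod ℓ) ^ p₁ = 1 → ℓ = p₂ := by
    intro ℓ hℓp hℓn hq'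
    have hℓS : ℓ ∣ S := hℓn.trans ⟨T, by rw [← hnT]⟩
    have hcast : ((S : ℕ) : ZMod ℓ) = (p₂ : ZMod ℓ) := by
      rw [hS]
      push_cast
      rw [hq']
      simp
    have h0 : ((S : ℕ) : ZMod ℓ) = 0 := (ZMod.natCast_eq_zero_iff _ _).2 hℓS
    have hℓ2 : ℓ ∣ p₂ := (ZMod.natCast_eq_zero_iff _ _).1 (hcast ▸ h0)
    exact (Nat.prime_dvd_prime_iff_eq hℓp hp2).1 hℓ2
  have subB : ∀ ℓ : ℕ, ℓ.Prime → ℓ ∣ n → (q : ZMod ℓ) ^ p₂ = 1 → ℓ = p₁ := by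
    intro ℓ hℓp hℓn hq'
    have hℓS : ℓ ∣ S' := hℓn.trans ⟨U, by rw [← hnU]⟩
    have hcast : ((S' : ℕ) : ZMod ℓ) = (p₁ : ZMod ℓ) := by
      rw [hS']
      push_cast
      rw [hq']
      simp
    have h0 : ((S' : ℕ) : ZMod ℓ) = 0 := (ZMod.natCast_eq_zero_iff _ _).2 hℓS
    have hℓ1 : ℓ ∣ p₁ := (ZMod.natCast_eq_zero_iff _ _).1 (hcast ▸ h0)
    exact (Nat.prime_dvd_prime_iff_eq hℓp hp1).1 hℓ1
  have hcopB : Nat.Coprime n B := by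
    by_contra hc
    obtain ⟨ℓ, hℓp, hℓn, hℓB⟩ := exists_prime_dvd_of_not_coprime n B hc
    have hqB : (q : ZMod ℓ) ^ p₂ = 1 := (pow_eq_one_iff_dvd ℓ q p₂ hq1).2 (hB ▸ hℓB)
    have hℓp1 : ℓ = p₁ := subB ℓ hℓp hℓn hqB
    haveI : Fact ℓ.Prime := ⟨hℓp⟩
    have hqne : (q : ZMod ℓ) ≠ 0 := by
      rw [Ne, ZMod.natCast_eq_zero_iff]
      intro hdvd
      have h1 : ℓ ∣ Nat.gcd n q := Nat.dvd_gcd hℓn hdvd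
      rw [Nat.coprime_iff_gcd_eq_one.1 hnq] at h1
      exact hℓp.one_lt.ne' (Nat.eq_one_of_dvd_one h1)
    have hfermat : (q : ZMod ℓ) ^ (ℓ - 1) = 1 := ZMod.pow_card_sub_one_eq_one hqne
    have hd1 : orderOf (q : ZMod ℓ) ∣ p₂ := orderOf_dvd_of_pow_eq_one hqB
    have hd2 : orderOf (q : ZMod ℓ) ∣ ℓ - 1 := orderOf_dvd_of_pow_eq_one hfermat
    have hord : orderOf (q : ZMod ℓ) = 1 := by
      rcases hp2.eq_one_or_self_of_dvd _ hd1 with h | h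
      · exact h
      · exfalso
        have hle : orderOf (q : ZMod ℓ) ≤ ℓ - 1 :=
          Nat.le_of_dvd (by have := hℓp.two_le; omega) hd2
        have := hℓp.two_le
        omega
    have hqone : (q : ZMod ℓ) = 1 := orderOf_eq_one_iff.1 hord
    have hℓp2 : ℓ = p₂ := subA ℓ hℓp hℓn (by rw [hqone, one_pow])
    omega
  have hq1dvdA : (q - 1 : ℕ) ∣ A := by
    rw [hA]; simpa using Nat.sub_dvd_pow_sub_pow q 1 p₁
  have hcopA : Nat.Coprime n A := by
    by_contra hc
    obtain ⟨ℓ, hℓp, hℓn, hℓA⟩ := exists_prime_dvd_of_not_coprime n A hc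
    have hqA : (q : ZMod ℓ) ^ p₁ = 1 := (pow_eq_one_iff_dvd ℓ q p₁ hq1).2 (hA ▸ hℓA)
    have hℓp2 : ℓ = p₂ := subA ℓ hℓp hℓn hqA
    have hp2q1 : ¬ p₂ ∣ q - 1 := by
      intro hdvd
      have hqone : (q : ZMod ℓ) = 1 := by
        have h1 : (q : ZMod ℓ) ^ 1 = 1 :=
          (pow_eq_one_iff_dvd ℓ q 1 hq1).2 (by rw [hℓp2]; simpa using hdvd)
        simpa using h1
      have : ℓ = p₁ := subB ℓ hℓp hℓn (by rw [hqone, one_pow])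
      omega
    have hrA : r ∣ A := hrdvd.trans hq1dvdA
    obtain ⟨c, hc'⟩ := hrA
    have hAr : A / r = c := by rw [hc']; exact Nat.mul_div_cancel_left c hr
    have hp2rc : p₂ ∣ r * c := by rw [← hc', ← hℓp2]; exact hℓA
    rcases (Nat.Prime.dvd_mul hp2).1 hp2rc with h | h
    · exact hp2q1 (h.trans hrdvd)
    · exact hndvd (hAr ▸ h)
  have hcopq1 : Nat.Coprime n (q - 1) := Nat.Coprime.coprime_dvd_right hq1dvdA hcopA
  have hcopnr : Nat.Coprime n r := Nat.Coprime.coprime_dvd_right hrdvd hcopq1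
  have hcoprq : Nat.Coprime r q :=
    coprime_of_dvd_pow_sub_one r q 1 hq1 one_pos (by simpa using hrdvd)
  have hNq : Nat.Coprime N q := by rw [hNdef]; exact Nat.Coprime.mul hnq hcoprq
  -- order of q modulo any divisor d > 1 of n is p₁ p₂
  have hordd : ∀ d m : ℕ, d ∣ n → 1 < d → d ∣ q ^ m - 1 → p₁ * p₂ ∣ m := by
    intro d m hdn hd1 hdm
    have h1 : (q : ZMod d) ^ (p₁ * p₂) = 1 :=
      (pow_eq_one_iff_dvd d q (p₁ * p₂) hq1).2 (hdn.trans (hM ▸ hnM))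
    have he1 : orderOf (q : ZMod d) ∣ p₁ * p₂ := orderOf_dvd_of_pow_eq_one h1
    have he2 : orderOf (q : ZMod d) ∣ m :=
      orderOf_dvd_of_pow_eq_one ((pow_eq_one_iff_dvd d q m hq1).2 hdm)
    rcases dvd_prime_mul_prime p₁ p₂ _ hp1 hp2 hlt.ne he1 with h | h | h
    · exfalso
      have h2 : (q : ZMod d) ^ p₁ = 1 := orderOf_dvd_iff_pow_eq_one.1 h
      have hdA : d ∣ A := hA ▸ (pow_eq_one_iff_dvd d q p₁ hq1).1 h2
      have h3 : d ∣ Nat.gcd n A := Nat.dvd_gcd hdn hdA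
      rw [Nat.coprime_iff_gcd_eq_one.1 hcopA] at h3
      have := Nat.eq_one_of_dvd_one h3
      omega
    · exfalso
      have h2 : (q : ZMod d) ^ p₂ = 1 := orderOf_dvd_iff_pow_eq_one.1 h
      have hdB : d ∣ B := hB ▸ (pow_eq_one_iff_dvd d q p₂ hq1).1 h2
      have h3 : d ∣ Nat.gcd n B := Nat.dvd_gcd hdn hdB
      rw [Nat.coprime_iff_gcd_eq_one.1 hcopB] at h3
      have := Nat.eq_one_of_dvd_one h3
      omega
    · exact h ▸ he2
  -- combinatorial part
  have hNpos : 0 < N := by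
    rw [hNdef]; exact Nat.mul_pos (by omega) hr
  have hrQ : ∀ j : ℕ, r ∣ q ^ j - 1 := fun j =>
    hrdvd.trans (by simpa using Nat.sub_dvd_pow_sub_pow q 1 j)
  have hZI : ∀ i ∈ Zset n r, i ∈ Finset.Icc 1 N := by
    intro i hi
    simp only [Zset, Finset.mem_image, Finset.mem_range] at hi
    obtain ⟨k, hk, rfl⟩ := hi
    have h1 : k * r ≤ (n - 1) * r := Nat.mul_le_mul_right r (by omega)
    have h2 : n * r = (n - 1) * r + r := by
      cases n with
      | zero => omega
      | succ m => rw [Nat.succ_sub_one, Nat.succ_mul]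
    rw [Finset.mem_Icc, hNdef]
    omega
  have hmemself : ∀ i ∈ Zset n r, i ∈ cosetOf q N i := by
    intro i hi
    simp only [cosetOf, Finset.mem_filter]
    exact ⟨hZI i hi, 0, by simpa using Nat.ModEq.refl i⟩
  have key : ∀ i ∈ Zset n r, ∀ K : ℕ, r ∣ K → (N ∣ i * K ↔ n / Nat.gcd i n ∣ K) := by
    intro i hi K hrK
    obtain ⟨s, rfl⟩ := hrK
    have hiI := hZI i hi
    simp only [Finset.mem_Icc] at hiI
    have hipos : 0 < i := by omega
    have hgpos : 0 < Nat.gcd i n := Nat.gcd_pos_of_pos_left n hipos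
    have hgn : Nat.gcd i n ∣ n := Nat.gcd_dvd_right i n
    have hgi : Nat.gcd i n ∣ i := Nat.gcd_dvd_left i n
    have hco : Nat.Coprime (i / Nat.gcd i n) (n / Nat.gcd i n) :=
      Nat.coprime_div_gcd_div_gcd hgpos
    have hdn : n / Nat.gcd i n ∣ n := Nat.div_dvd_of_dvd hgn
    have hdr : Nat.Coprime (n / Nat.gcd i n) r := Nat.Coprime.coprime_dvd_left hdn hcopnr
    have step1 : N ∣ i * (r * s) ↔ n ∣ i * s := by
      have e1 : i * (r * s) = (i * s) * r := by ring
      rw [hNdef, e1, Nat.mul_dvd_mul_iff_right hr]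
    have step2 : n ∣ i * s ↔ n / Nat.gcd i n ∣ s := by
      constructor
      · intro h
        have h1 : (n / Nat.gcd i n) * Nat.gcd i n ∣ ((i / Nat.gcd i n) * Nat.gcd i n) * s := by
          rw [Nat.div_mul_cancel hgn, Nat.div_mul_cancel hgi]; exact h
        have h2 : n / Nat.gcd i n ∣ (i / Nat.gcd i n) * s := by
          have e : ((i / Nat.gcd i n) * Nat.gcd i n) * s = ((i / Nat.gcd i n) * s) * Nat.gcd i n := by
            ring
          rw [e] at h1
          exact (Nat.mul_dvd_mul_iff_right hgpos).1 h1
        exact hco.symm.dvd_of_dvd_mul_left h2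
      · intro h
        have h1 := mul_dvd_mul hgi h
        rwa [Nat.mul_div_cancel' hgn] at h1
    have step3 : n / Nat.gcd i n ∣ s ↔ n / Nat.gcd i n ∣ r * s :=
      ⟨fun h => h.mul_left r, fun h => hdr.dvd_of_dvd_mul_left h⟩
    rw [step1, step2]
    exact step3
  have hEall : ∀ i ∈ Zset n r, i * q ^ (p₁ * p₂) ≡ i [MOD N] := by
    intro i hi
    have h1 : N ∣ i * (q ^ (p₁ * p₂) - 1) := by
      rw [key i hi _ (hrQ _)]
      exact (Nat.div_dvd_of_dvd (Nat.gcd_dvd_right i n)).trans (hM ▸ hnM)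
    have hle : i ≤ i * q ^ (p₁ * p₂) :=
      Nat.le_mul_of_pos_right i (Nat.pow_pos (by omega))
    have he : i * q ^ (p₁ * p₂) - i = i * (q ^ (p₁ * p₂) - 1) := by
      rw [Nat.mul_sub, mul_one]
    exact ((Nat.modEq_iff_dvd' hle).2 (by rw [he]; exact h1)).symm
  have hsubZ : ∀ i ∈ Zset n r, cosetOf q N i ⊆ Zset n r := by
    intro i hi x hx
    simp only [cosetOf, Finset.mem_filter, Finset.mem_Icc] at hx
    obtain ⟨⟨hx1, hx2⟩, j, hj⟩ := hx
    simp only [Zset, Finset.mem_image, Finset.mem_range] at hi ⊢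
    obtain ⟨k, hk, rfl⟩ := hi
    have hir : (1 + k * r) * q ^ j ≡ 1 [MOD r] := by
      have h1 : (1 : ℕ) ≡ 1 + k * r [MOD r] :=
        (Nat.modEq_iff_dvd' (by omega)).2 ⟨k, by rw [Nat.add_sub_cancel_left, Nat.mul_comm k r]⟩
      have h2 : (1 : ℕ) ≡ q ^ j [MOD r] :=
        (Nat.modEq_iff_dvd' (Nat.one_le_pow _ _ hq1)).2 (hrQ j)
      calc (1 + k * r) * q ^ j ≡ 1 * 1 [MOD r] := (h1.symm).mul (h2.symm)
        _ = 1 := by ring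
    have hrN : r ∣ N := by rw [hNdef]; exact dvd_mul_left r n
    have hxr : x ≡ 1 [MOD r] := (Nat.ModEq.of_dvd hrN hj).trans hir
    have hdx : r ∣ x - 1 := (Nat.modEq_iff_dvd' hx1).1 hxr.symm
    obtain ⟨k', hk'⟩ := hdx
    have hcomm : r * k' = k' * r := Nat.mul_comm r k'
    refine ⟨k', ?_, by omega⟩
    by_contra hcon
    push_neg at hcon
    have h3 : n * r ≤ k' * r := Nat.mul_le_mul_right r hcon
    rw [hNdef] at hx2
    omega
  obtain ⟨k₀, hk₀n, hk₀dvd⟩ : ∃ k, k < n ∧ n ∣ 1 + k * r := by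
    haveI : NeZero n := ⟨by omega⟩
    have hu : IsUnit (r : ZMod n) := (ZMod.isUnit_iff_coprime r n).2 (Nat.coprime_comm.1 hcopnr)
    obtain ⟨y, hy⟩ := hu.exists_right_inv
    refine ⟨(-y).val, ZMod.val_lt _, ?_⟩
    rw [← ZMod.natCast_eq_zero_iff]
    push_cast
    rw [ZMod.natCast_val, ZMod.cast_id]
    have h1 : (-y) * (r : ZMod n) = -1 := by rw [neg_mul, mul_comm, hy]
    rw [h1]
    ring
  set i₀ := 1 + k₀ * r with hi₀def
  have hi₀Z : i₀ ∈ Zset n r := by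
    simp only [Zset, Finset.mem_image, Finset.mem_range]
    exact ⟨k₀, hk₀n, rfl⟩
  have huniq : ∀ i ∈ Zset n r, n ∣ i → i = i₀ := by
    intro i hi hni
    simp only [Zset, Finset.mem_image, Finset.mem_range] at hi
    obtain ⟨k, hk, rfl⟩ := hi
    have hkk : k = k₀ := by
      rcases le_total k k₀ with h | h
      · have hd : n ∣ (k₀ - k) * r := by
          have e : (k₀ - k) * r = (1 + k₀ * r) - (1 + k * r) := by
            rw [Nat.sub_mul]; omega
          rw [e]; exact Nat.dvd_sub hk₀dvd hni
        have hdk : n ∣ k₀ - k := hcopnr.dvd_of_dvd_mul_right hd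
        rcases Nat.eq_zero_or_pos (k₀ - k) with h0 | h0
        · omega
        · have := Nat.le_of_dvd h0 hdk; omega
      · have hd : n ∣ (k - k₀) * r := by
          have e : (k - k₀) * r = (1 + k * r) - (1 + k₀ * r) := by
            rw [Nat.sub_mul]; omega
          rw [e]; exact Nat.dvd_sub hni hk₀dvd
        have hdk : n ∣ k - k₀ := hcopnr.dvd_of_dvd_mul_right hd
        rcases Nat.eq_zero_or_pos (k - k₀) with h0 | h0
        · omega
        · have := Nat.le_of_dvd h0 hdk; omega
    rw [hkk]
  have hcase1 : cosetOf q N i₀ = {i₀} := by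
    have hmod : ∀ j, i₀ * q ^ j ≡ i₀ [MOD N] := by
      intro j
      have h1 : N ∣ i₀ * (q ^ j - 1) := by
        rw [hNdef]; exact mul_dvd_mul hk₀dvd (hrQ j)
      have hle : i₀ ≤ i₀ * q ^ j :=
        Nat.le_mul_of_pos_right i₀ (Nat.pow_pos (by omega))
      have he : i₀ * q ^ j - i₀ = i₀ * (q ^ j - 1) := by rw [Nat.mul_sub, mul_one]
      exact ((Nat.modEq_iff_dvd' hle).2 (by rw [he]; exact h1)).symm
    ext x
    simp only [cosetOf, Finset.mem_filter, Finset.mem_singleton]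
    constructor
    · rintro ⟨hxI, j, hj⟩
      have hx : x ≡ i₀ [MOD N] := hj.trans (hmod j)
      exact castIcc_inj N hxI (hZI i₀ hi₀Z) ((ZMod.natCast_eq_natCast_iff _ _ _).2 hx)
    · rintro rfl
      exact ⟨hZI i₀ hi₀Z, 0, by simpa using Nat.ModEq.refl i₀⟩
  have hcard1 : (cosetOf q N i₀).card = 1 := by rw [hcase1]; exact Finset.card_singleton i₀
  have hcaseB : ∀ i ∈ Zset n r, ¬ n ∣ i → (cosetOf q N i).card = p₁ * p₂ := by
    intro i hi hni
    have hiI := hZI i hi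
    simp only [Finset.mem_Icc] at hiI
    have hipos : 0 < i := by omega
    have hgn : Nat.gcd i n ∣ n := Nat.gcd_dvd_right i n
    have hgpos : 0 < Nat.gcd i n := Nat.gcd_pos_of_pos_left n hipos
    have hd1 : 1 < n / Nat.gcd i n := by
      have hmul : n / Nat.gcd i n * Nat.gcd i n = n := Nat.div_mul_cancel hgn
      rcases Nat.lt_or_ge (n / Nat.gcd i n) 2 with h | h
      · exfalso
        have h01 : n / Nat.gcd i n = 0 ∨ n / Nat.gcd i n = 1 := by
          rcases Nat.eq_zero_or_pos (n / Nat.gcd i n) with h0 | h0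
          · exact Or.inl h0
          · exact Or.inr (by omega)
        rcases h01 with h0 | h0 <;> rw [h0] at hmul
        · rw [zero_mul] at hmul; omega
        · rw [one_mul] at hmul
          exact hni (hmul ▸ Nat.gcd_dvd_left i n)
      · omega
    apply card_cosetOf_s19 q N i (p₁ * p₂) hNpos hPpos (hEall i hi) (hZI i hi)
    intro a b hab hbE hmod
    have hle : i * q ^ a ≤ i * q ^ b :=
      Nat.mul_le_mul (le_refl i) (Nat.pow_le_pow_right hq1 hab)
    have hdvd1 : N ∣ i * q ^ b - i * q ^ a := (Nat.modEq_iff_dvd' hle).1 hmod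
    have hba : b - a + a = b := by omega
    have he : (i * (q ^ (b - a) - 1)) * q ^ a = i * q ^ b - i * q ^ a := by
      rw [Nat.mul_sub, mul_one, Nat.sub_mul, mul_assoc, ← pow_add, hba]
    have hdvd2 : N ∣ (i * (q ^ (b - a) - 1)) * q ^ a := by rw [he]; exact hdvd1
    have hdvd3 : N ∣ i * (q ^ (b - a) - 1) :=
      (hNq.pow_right a).dvd_of_dvd_mul_right hdvd2
    have hdvd4 : n / Nat.gcd i n ∣ q ^ (b - a) - 1 := (key i hi _ (hrQ _)).1 hdvd3
    have hP : p₁ * p₂ ∣ b - a := hordd (n / Nat.gcd i n) (b - a) (Nat.div_dvd_of_dvd hgn) hd1 hdvd4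
    rcases Nat.eq_zero_or_pos (b - a) with h0 | h0
    · omega
    · have := Nat.le_of_dvd h0 hP; omega
  have hdich : ∀ i ∈ Zset n r, (cosetOf q N i).card = 1 ∨ (cosetOf q N i).card = p₁ * p₂ := by
    intro i hi
    by_cases h : n ∣ i
    · left; rw [huniq i hi h]; exact hcard1
    · right; exact hcaseB i hi h
  have hmemCos : ∀ C, C ∈ cosetsIn q n r ↔ ∃ i ∈ Zset n r, cosetOf q N i = C := by
    intro C
    simp only [cosetsIn, Finset.mem_image, ← hNdef]
  have hfilter1 : (cosetsIn q n r).filter (fun C => C.card = 1) = {cosetOf q N i₀} := by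
    ext C
    simp only [Finset.mem_filter, Finset.mem_singleton, hmemCos]
    constructor
    · rintro ⟨⟨i, hi, rfl⟩, hc⟩
      by_cases h : n ∣ i
      · rw [huniq i hi h]
      · rw [hcaseB i hi h] at hc
        omega
    · rintro rfl
      exact ⟨⟨i₀, hi₀Z, rfl⟩, hcard1⟩
  have hfilterE : ∀ l, l ≠ 1 → l ≠ p₁ * p₂ →
      (cosetsIn q n r).filter (fun C => C.card = l) = ∅ := by
    intro l h1 h2
    rw [Finset.eq_empty_iff_forall_notMem]
    intro C hC
    rw [Finset.mem_filter] at hC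
    obtain ⟨hC1, hC2⟩ := hC
    obtain ⟨i, hi, hEq⟩ := (hmemCos C).1 hC1
    subst hEq
    rcases hdich i hi with h | h <;> omega
  have hdisj : ∀ C₁ ∈ cosetsIn q n r, ∀ C₂ ∈ cosetsIn q n r, C₁ ≠ C₂ → Disjoint C₁ C₂ := by
    intro C₁ h₁ C₂ h₂ hne
    obtain ⟨i₁, hi₁, hEq₁⟩ := (hmemCos C₁).1 h₁
    obtain ⟨i₂, hi₂, hEq₂⟩ := (hmemCos C₂).1 h₂
    subst hEq₁; subst hEq₂
    rw [Finset.disjoint_left]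
    intro x hx₁ hx₂
    exact hne (((coset_eq_of_mem q N i₁ x _ (hEall i₁ hi₁) hPpos hx₁).symm).trans
      (coset_eq_of_mem q N i₂ x _ (hEall i₂ hi₂) hPpos hx₂))
  have hbiU : (cosetsIn q n r).biUnion (fun C => C) = Zset n r := by
    ext x
    simp only [Finset.mem_biUnion]
    constructor
    · rintro ⟨C, hC, hxC⟩
      obtain ⟨i, hi, hEq⟩ := (hmemCos C).1 hC
      subst hEq
      exact hsubZ i hi hxC
    · intro hx
      exact ⟨cosetOf q N x, (hmemCos _).2 ⟨x, hx, rfl⟩, hmemself x hx⟩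
  have hinj : Function.Injective (fun k : ℕ => 1 + k * r) := by
    intro a b hab
    simp only at hab
    exact Nat.eq_of_mul_eq_mul_right hr (by omega)
  have hcardZ : (Zset n r).card = n := by
    rw [Zset, Finset.card_image_of_injective _ hinj, Finset.card_range]
  have hsum : n = ∑ C ∈ cosetsIn q n r, C.card := by
    have h := Finset.card_biUnion hdisj
    rw [hbiU, hcardZ] at h
    exact h
  set t := ((cosetsIn q n r).filter (fun C => C.card = p₁ * p₂)).card with ht
  have hsplit : ∑ C ∈ cosetsIn q n r, C.card = 1 + t * (p₁ * p₂) := by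
    rw [← Finset.sum_filter_add_sum_filter_not (cosetsIn q n r) (fun C => C.card = 1)]
    congr 1
    · rw [hfilter1, Finset.sum_singleton, hcard1]
    · have hfiltereq : (cosetsIn q n r).filter (fun C => ¬ C.card = 1) =
          (cosetsIn q n r).filter (fun C => C.card = p₁ * p₂) := by
        apply Finset.filter_congr
        intro C hC
        obtain ⟨i, hi, hEq⟩ := (hmemCos C).1 hC
        subst hEq
        rcases hdich i hi with h | h <;> rw [h] <;>
          constructor <;> intro h' <;> omega
      rw [hfiltereq, Finset.sum_congr rfl (fun C hC => (Finset.mem_filter.1 hC).2),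
        Finset.sum_const, smul_eq_mul]
  have hfin : n = 1 + t * (p₁ * p₂) := by rw [hsum, hsplit]
  refine ⟨?_, ?_, ?_, ?_, ?_⟩
  · ext c
    simp only [Finset.mem_image, Finset.mem_insert, Finset.mem_singleton]
    constructor
    · rintro ⟨i, hi, rfl⟩
      rcases hdich i hi with h | h
      · left; exact h
      · right; exact h
    · rintro (rfl | rfl)
      · exact ⟨i₀, hi₀Z, hcard1⟩
      · have h1Z : (1 : ℕ) ∈ Zset n r := by
          simp only [Zset, Finset.mem_image, Finset.mem_range]
          exact ⟨0, by omega, by ring⟩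
        have h1n : ¬ n ∣ 1 := fun h => by have := Nat.le_of_dvd one_pos h; omega
        exact ⟨1, h1Z, hcaseB 1 h1Z h1n⟩
  · show ((cosetsIn q n r).filter (fun C => C.card = 1)).card = 1
    rw [hfilter1]
    exact Finset.card_singleton _
  · show ((cosetsIn q n r).filter (fun C => C.card = p₁)).card = 0
    rw [hfilterE p₁ (by omega) (by
      intro h
      have h2 : p₁ * 2 ≤ p₁ * p₂ := Nat.mul_le_mul (le_refl p₁) hp2two
      omega)]
    exact Finset.card_empty
  · show ((cosetsIn q n r).filter (fun C => C.card = p₂)).card = 0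
    rw [hfilterE p₂ (by omega) (by
      intro h
      have h2 : 2 * p₂ ≤ p₁ * p₂ := Nat.mul_le_mul hp1two (le_refl p₂)
      omega)]
    exact Finset.card_empty
  · show ((cosetsIn q n r).filter (fun C => C.card = p₁ * p₂)).card = (n - 1) / (p₁ * p₂)
    rw [← ht]
    have h1 : n - 1 = t * (p₁ * p₂) := by omega
    rw [h1, Nat.mul_div_cancel _ hPpos]
end
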